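/- Let G be a finite group with identity e and let (Y_t)_{t≥0} be a G-valued Lévy process (independent stationary right increments, Y₀ = e, continuous in probability). Then for every t > 0, the support of the law of Y_t equals H_Y, the subgroup generated by the union over all s ≥ 0 of the supports of Y_s, provided e ∈ Supp(Y_s) for all s. -/

import Mathlib

open MeasureTheory
open scoped NNReal

/-- Let `G` be a finite group and `(Y_t)_{t ≥ 0}` a `G`-valued Lévy process (a.s. `Y₀ = e`,
stationary right increments, increments independent of the past, continuity in probability).
If the identity belongs to the support of the law of every `Y_s`, then for every `t > 0` the
support of the law of `Y_t` equals the subgroup `H_Y` generated by the union of the supports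
of all the `Y_s`. -/
theorem levy_process_support_finite_group {G : Type*} [Group G] [Finite G]
    [MeasurableSpace G] [MeasurableSingletonClass G]
    {Ω : Type*} [MeasurableSpace Ω] (P : Measure Ω) [IsProbabilityMeasure P]
    (Y : ℝ≥0 → Ω → G) (hmeas : ∀ t, Measurable (Y t))
    (h0 : ∀ᵐ ω ∂P, Y 0 ω = 1)
    (hstat : ∀ s t : ℝ≥0, s ≤ t →
      P.map (fun ω => (Y s ω)⁻¹ * Y t ω) = P.map (Y (t - s)))
    (hind : ∀ s t : ℝ≥0, s ≤ t →
      ProbabilityTheory.Indep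
        (⨆ u : ℝ≥0, ⨆ _ : u ≤ s, MeasurableSpace.comap (Y u) inferInstance)
        (MeasurableSpace.comap (fun ω => (Y s ω)⁻¹ * Y t ω) inferInstance) P)
    (hcont : ∀ t : ℝ≥0,
      Filter.Tendsto (fun s => P {ω | Y s ω ≠ Y t ω}) (nhds t) (nhds 0))
    (hone : ∀ s : ℝ≥0, P {ω | Y s ω = 1} ≠ 0) :
    ∀ t : ℝ≥0, 0 < t →
      {g : G | P {ω | Y t ω = g} ≠ 0} =
        ((Subgroup.closure (⋃ s : ℝ≥0, {g : G | P {ω | Y s ω = g} ≠ 0}) : Subgroup G) :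
          Set G) := by
  set S : ℝ≥0 → Set G := fun s => {g : G | P {ω | Y s ω = g} ≠ 0} with hS
  -- convolution identity
  have conv : ∀ s t : ℝ≥0, ∀ g : G,
      g ∈ S (s + t) ↔ ∃ h : G, h ∈ S s ∧ h⁻¹ * g ∈ S t := by
    intro s t g
    set Z : Ω → G := fun ω => (Y s ω)⁻¹ * Y (s + t) ω with hZ
    have hZmeas : Measurable Z := ((hmeas s).inv).mul (hmeas (s + t))
    have hle : s ≤ s + t := le_self_add
    have hmap : P.map Z = P.map (Y t) := by
      have := hstat s (s + t) hle
      rwa [add_tsub_cancel_left] at this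
    have hZlaw : ∀ k : G, P {ω | Z ω = k} = P {ω | Y t ω = k} := by
      intro k
      have h1 : P.map Z {k} = P.map (Y t) {k} := by rw [hmap]
      rwa [Measure.map_apply hZmeas (measurableSet_singleton k),
        Measure.map_apply (hmeas t) (measurableSet_singleton k)] at h1
    have hindep := (ProbabilityTheory.Indep_iff _ _ _).mp (hind s (s + t) hle)
    have hprod : ∀ h k : G,
        P ({ω | Y s ω = h} ∩ {ω | Z ω = k}) = P {ω | Y s ω = h} * P {ω | Z ω = k} := by
      intro h k
      refine hindep _ _ ?_ ⟨{k}, measurableSet_singleton k, rfl⟩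
      have hle2 : MeasurableSpace.comap (Y s) inferInstance ≤
          ⨆ u : ℝ≥0, ⨆ _ : u ≤ s, MeasurableSpace.comap (Y u) inferInstance :=
        le_iSup₂ (f := fun (u : ℝ≥0) (_ : u ≤ s) =>
          MeasurableSpace.comap (Y u) inferInstance) s le_rfl
      exact hle2 _ ⟨{h}, measurableSet_singleton h, rfl⟩
    constructor
    · intro hg
      have hcover : {ω | Y (s + t) ω = g} = ⋃ h : G, ({ω | Y s ω = h} ∩ {ω | Z ω = h⁻¹ * g}) := by
        ext ω
        simp only [Set.mem_setOf_eq, Set.mem_iUnion, Set.mem_inter_iff]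
        constructor
        · intro hω
          exact ⟨Y s ω, rfl, by simp [hZ, hω]⟩
        · rintro ⟨h, h1, h2⟩
          have : Y (s + t) ω = Y s ω * Z ω := by simp [hZ]
          rw [this, h1, h2]
          group
      rw [hS] at hg
      simp only [Set.mem_setOf_eq] at hg
      rw [hcover] at hg
      have : ∃ h : G, P ({ω | Y s ω = h} ∩ {ω | Z ω = h⁻¹ * g}) ≠ 0 := by
        by_contra hc
        push_neg at hc
        exact hg (measure_iUnion_null fun h => hc h)
      obtain ⟨h, hh⟩ := this
      rw [hprod] at hh
      refine ⟨h, ?_, ?_⟩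
      · exact fun h0 => hh (by rw [h0, zero_mul])
      · have : P {ω | Z ω = h⁻¹ * g} ≠ 0 := fun h0 => hh (by rw [h0, mul_zero])
        rwa [hZlaw] at this
    · rintro ⟨h, hh1, hh2⟩
      rw [hS]; simp only [Set.mem_setOf_eq]
      have hsub : {ω | Y s ω = h} ∩ {ω | Z ω = h⁻¹ * g} ⊆ {ω | Y (s + t) ω = g} := by
        rintro ω ⟨h1, h2⟩
        simp only [Set.mem_setOf_eq] at h1 h2 ⊢
        have : Y (s + t) ω = Y s ω * Z ω := by simp [hZ]
        rw [this, h1, h2]; group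
      intro hg
      have := measure_mono_null hsub hg
      rw [hprod] at this
      rcases mul_eq_zero.mp this with h1 | h2
      · exact hh1 h1
      · rw [hZlaw] at h2; exact hh2 h2
  have hone' : ∀ s : ℝ≥0, (1 : G) ∈ S s := fun s => hone s
  -- monotonicity
  have mono : ∀ s t : ℝ≥0, s ≤ t → S s ⊆ S t := by
    intro s t hst g hg
    have h2 : g ∈ S (s + (t - s)) :=
      (conv s (t - s) g).mpr ⟨g, hg, by rw [inv_mul_cancel]; exact hone' _⟩
    rwa [add_tsub_cancel_of_le hst] at h2
  -- minimal value on (0, ∞)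
  have hfin : (S '' {s : ℝ≥0 | 0 < s}).Finite := Set.toFinite _
  obtain ⟨s₀, hs₀pos, hs₀min⟩ : ∃ a ∈ {s : ℝ≥0 | 0 < s},
      ∀ a' ∈ {s : ℝ≥0 | 0 < s}, S a' ≤ S a → S a = S a' := by
    obtain ⟨a, ha, hmin⟩ :=
      Set.Finite.exists_minimalFor' S {s : ℝ≥0 | 0 < s} hfin ⟨1, show (0:ℝ≥0) < 1 from one_pos⟩
    exact ⟨a, ha, fun a' ha' h => le_antisymm (hmin ha' h) h⟩
  simp only [Set.mem_setOf_eq] at hs₀pos hs₀min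
  set A : Set G := S s₀ with hA
  have hsmall : ∀ s : ℝ≥0, 0 < s → s ≤ s₀ → S s = A :=
    fun s hs hss₀ => (hs₀min s hs (mono _ _ hss₀)).symm
  -- constancy of S on (0, ∞)
  have hconst : ∀ t : ℝ≥0, 0 < t → S t = A := by
    intro t ht
    obtain ⟨n, hn⟩ := exists_nat_ge (2 * t / s₀)
    set m : ℕ := n + 1 with hm
    have hmpos : (0 : ℝ≥0) < (m : ℝ≥0) := by positivity
    set u : ℝ≥0 := t / (m : ℝ≥0) with hu0
    have hupos : 0 < u := by
      rw [hu0]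
      exact div_pos ht hmpos
    have h2u : 2 * u ≤ s₀ := by
      rw [hu0, mul_div_assoc']
      rw [div_le_iff₀ hmpos]
      have h1 : 2 * t / s₀ ≤ (m : ℝ≥0) := le_trans hn (by exact_mod_cast Nat.le_succ n)
      rw [div_le_iff₀ hs₀pos] at h1
      calc 2 * t ≤ (m : ℝ≥0) * s₀ := h1
        _ = s₀ * (m : ℝ≥0) := mul_comm _ _
    have huu : u + u ≤ s₀ := by rwa [← two_mul]
    have hSu : S u = A := hsmall u hupos (le_trans (le_add_self) huu)
    have hS2u : S (u + u) = A := hsmall (u + u) (by positivity) huu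
    have key : ∀ k : ℕ, S ((k + 1 : ℕ) * u) = A := by
      intro k
      induction k with
      | zero => simpa using hSu
      | succ k ih =>
        have hstep : ((k + 1 + 1 : ℕ) : ℝ≥0) * u = ((k + 1 : ℕ) : ℝ≥0) * u + u := by
          push_cast; ring
        rw [hstep, ← hS2u]
        ext g
        rw [conv (((k + 1 : ℕ) : ℝ≥0) * u) u g, conv u u g, ih, hSu]
    have htm : t = ((m : ℕ) : ℝ≥0) * u := by
      rw [hu0, mul_div_assoc']
      rw [eq_div_iff hmpos.ne', mul_comm]
    rw [htm]
    exact key n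
  -- multiplicativity and subgroup structure of A
  have hmul : ∀ a b : G, a ∈ A → b ∈ A → a * b ∈ A := by
    intro a b ha hb
    have : a * b ∈ S (s₀ + s₀) :=
      (conv s₀ s₀ (a * b)).mpr ⟨a, ha, by rwa [inv_mul_cancel_left]⟩
    rwa [hconst (s₀ + s₀) (by positivity)] at this
  have hApow : ∀ a : G, a ∈ A → ∀ k : ℕ, a ^ (k + 1) ∈ A := by
    intro a ha k
    induction k with
    | zero => simpa using ha
    | succ k ih => rw [pow_succ]; exact hmul _ _ ih ha
  have hinv : ∀ a : G, a ∈ A → a⁻¹ ∈ A := by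
    intro a ha
    obtain ⟨k, hk⟩ : ∃ k, orderOf a = k + 1 :=
      ⟨orderOf a - 1, (Nat.succ_pred_eq_of_pos (orderOf_pos a)).symm⟩
    have hpow : a ^ (k + 1) = 1 := by rw [← hk]; exact pow_orderOf_eq_one a
    have hak : a ^ k = a⁻¹ := by
      have : a ^ k * a = 1 := by rw [← pow_succ]; exact hpow
      exact eq_inv_of_mul_eq_one_left this
    rcases Nat.eq_zero_or_pos k with hk0 | hkpos
    · have : a = 1 := by simpa [hk0] using hpow
      rw [this]; simpa using hone' s₀
    · obtain ⟨j, hj⟩ := Nat.exists_eq_add_of_lt hkpos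
      rw [← hak, hj]
      simpa using hApow a ha j
  let K : Subgroup G :=
    { carrier := A
      mul_mem' := fun ha hb => hmul _ _ ha hb
      one_mem' := hone' s₀
      inv_mem' := fun ha => hinv _ ha }
  -- the union of supports equals A
  have hS0 : S 0 ⊆ A := by
    intro g hg
    have hg1 : g = 1 := by
      by_contra hne
      apply hg
      have hsub : {ω | Y 0 ω = g} ⊆ {ω | ¬ Y 0 ω = 1} := by
        intro ω hω
        simp only [Set.mem_setOf_eq] at hω ⊢
        rw [hω]; exact hne
      exact measure_mono_null hsub (ae_iff.mp h0)
    rw [hg1]; exact hone' s₀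
  have hunion : (⋃ s : ℝ≥0, S s) = A := by
    apply subset_antisymm
    · intro g hg
      obtain ⟨s, hs⟩ := Set.mem_iUnion.mp hg
      rcases eq_or_lt_of_le (zero_le (a := s)) with h | h
      · exact hS0 (by rwa [← h] at hs)
      · rwa [hconst s h] at hs
    · exact fun g hg => Set.mem_iUnion.mpr ⟨s₀, hg⟩
  intro t ht
  show S t = ((Subgroup.closure (⋃ s : ℝ≥0, S s) : Subgroup G) : Set G)
  rw [hconst t ht, hunion]
  have hK : Subgroup.closure A = K := by
    rw [show A = (K : Set G) from rfl, Subgroup.closure_eq]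
  rw [hK]
  rfl
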